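/- Let k ≥ 2 be an integer, G a simple graph, and F a spanning subgraph of G with maximum degree Δ(F) ≤ k − 2. If β^k(G) ≥ 1, then β^2(G − E(F)) ≥ 1, where G − E(F) is the graph on V(G) with edge set E(G) \ E(F). -/

import Mathlib

open Finset
open scoped Classical

variable {V : Type*}

/-- The k-th neighborhood: vertices adjacent to at least `k` vertices of `S`. -/
noncomputable def kNbhd [Fintype V] (G : SimpleGraph V) (k : ℕ) (S : Finset V) : Finset V :=
  Finset.univ.filter fun v => k ≤ (S.filter fun u => G.Adj v u).card

/-- The k-th binding number. -/
noncomputable def bindingNum [Fintype V] (G : SimpleGraph V) (k : ℕ) : ℝ :=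
  if h : (Finset.univ.filter fun S : Finset V =>
      k ≤ S.card ∧ kNbhd G k S ≠ Finset.univ).Nonempty then
    (Finset.univ.filter fun S : Finset V =>
      k ≤ S.card ∧ kNbhd G k S ≠ Finset.univ).inf' h
      fun S => ((kNbhd G k S).card : ℝ) / (S.card : ℝ)
  else 0

private lemma adj_all_of_mem_kNbhd [Fintype V] {G : SimpleGraph V} {k : ℕ} {T : Finset V}
    (hT : T.card = k) {v : V} (hv : v ∈ kNbhd G k T) : ∀ u ∈ T, G.Adj v u := by
  simp only [kNbhd, mem_filter, mem_univ, true_and] at hv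
  have h := Finset.eq_of_subset_of_card_le (Finset.filter_subset _ _)
    (le_trans (le_of_eq hT) hv)
  intro u hu
  rw [← h] at hu
  exact (mem_filter.mp hu).2

attribute [-instance] SimpleGraph.Sdiff.adjDecidable

theorem stmt_14 [Fintype V] (k : ℕ) (hk : 2 ≤ k) (G F : SimpleGraph V)
    (hFG : F ≤ G) (hΔ : ∀ v : V, (F.neighborSet v).ncard ≤ k - 2)
    (hβ : 1 ≤ bindingNum G k) :
    1 ≤ bindingNum (G \ F) 2 := by
  classical
  set H := G \ F with hH
  -- F-degree bound in Finset form
  have hdegF : ∀ v : V, (univ.filter fun u => F.Adj v u).card ≤ k - 2 := by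
    intro v
    have h : ({u | F.Adj v u} : Set V).ncard ≤ k - 2 := hΔ v
    rwa [Set.ncard_eq_toFinset_card', Set.toFinset_setOf] at h
  -- unpack hβ : the key property of G
  have hP : ∀ S : Finset V, k ≤ S.card → kNbhd G k S ≠ univ →
      S.card ≤ (kNbhd G k S).card := by
    intro S h1 h2
    unfold bindingNum at hβ
    split_ifs at hβ with hne
    · have hmem : S ∈ univ.filter fun S : Finset V =>
          k ≤ S.card ∧ kNbhd G k S ≠ univ := mem_filter.mpr ⟨mem_univ _, h1, h2⟩
      have h3 := Finset.inf'_le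
        (fun S : Finset V => ((kNbhd G k S).card : ℝ) / (S.card : ℝ)) hmem
      have h4 : (1:ℝ) ≤ ((kNbhd G k S).card : ℝ) / (S.card : ℝ) := le_trans hβ h3
      have hpos : (0:ℝ) < (S.card : ℝ) := by
        have : 0 < S.card := by omega
        exact_mod_cast this
      rw [one_le_div hpos] at h4
      exact_mod_cast h4
    · exact absurd hβ (by norm_num)
  -- |V| ≥ k
  have hn : k ≤ Fintype.card V := by
    unfold bindingNum at hβ
    split_ifs at hβ with hne
    · obtain ⟨S₀, hS₀⟩ := hne
      simp only [mem_filter] at hS₀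
      exact le_trans hS₀.2.1 (Finset.card_le_univ _)
    · exact absurd hβ (by norm_num)
  -- every pair of distinct vertices has at least 2k-2 common G-neighbors
  have hcommon : ∀ x y : V, x ≠ y →
      2*k - 2 ≤ (univ.filter fun v => G.Adj v x ∧ G.Adj v y).card := by
    intro x y hxy
    set C := univ.filter fun v => G.Adj v x ∧ G.Adj v y with hC
    have hlam : ∀ T : Finset V, T.card = k → x ∈ T → y ∈ T →
        kNbhd G k T ⊆ C ∧ k ≤ (kNbhd G k T).card ∧ ∀ v ∈ kNbhd G k T, v ∉ T := by
      intro T hT hx hy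
      have hall : ∀ v ∈ kNbhd G k T, ∀ u ∈ T, G.Adj v u :=
        fun v hv => adj_all_of_mem_kNbhd hT hv
      have hnm : ∀ v ∈ kNbhd G k T, v ∉ T :=
        fun v hv hvT => (G.irrefl) (hall v hv v hvT)
      have hne : kNbhd G k T ≠ univ := by
        have hTpos : 0 < T.card := by omega
        obtain ⟨t, ht⟩ := Finset.card_pos.mp hTpos
        intro h
        exact hnm t (h ▸ mem_univ t) ht
      refine ⟨?_, hT ▸ hP T (le_of_eq hT.symm) hne, hnm⟩
      intro v hv
      simp only [hC, mem_filter, mem_univ, true_and]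
      exact ⟨hall v hv x hx, hall v hv y hy⟩
    have hpair : ({x, y} : Finset V).card = 2 := card_pair hxy
    obtain ⟨T₀, hsub0, _, hT₀⟩ := Finset.exists_subsuperset_card_eq (n := k)
      (Finset.subset_univ ({x,y} : Finset V)) (by rw [hpair]; exact hk)
      (by rw [Finset.card_univ]; exact hn)
    have h1 := hlam T₀ hT₀ (hsub0 (by simp)) (hsub0 (by simp))
    have hkC : k ≤ C.card := le_trans h1.2.1 (card_le_card h1.1)
    obtain ⟨B, hBC, hB⟩ := Finset.exists_subset_card_eq (s := C) (n := k-2) (by omega)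
    have hxB : x ∉ B := fun hxB => G.irrefl (mem_filter.mp (hBC hxB)).2.1
    have hyB : y ∉ B := fun hyB => G.irrefl (mem_filter.mp (hBC hyB)).2.2
    have hdisj : Disjoint ({x,y} : Finset V) B := by
      rw [Finset.disjoint_left]
      intro a ha haB
      rcases mem_insert.mp ha with rfl | ha
      · exact hxB haB
      · rw [mem_singleton] at ha; subst ha; exact hyB haB
    set T := ({x,y} : Finset V) ∪ B with hTdef
    have hTc : T.card = k := by
      rw [hTdef, card_union_of_disjoint hdisj, hpair, hB]; omega
    have h2 := hlam T hTc (by simp [hTdef]) (by simp [hTdef])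
    have hsub2 : kNbhd G k T ⊆ C \ B := by
      intro v hv
      rw [mem_sdiff]
      exact ⟨h2.1 hv, fun hvB => h2.2.2 v hv (by simp [hTdef, hvB])⟩
    have h3 := le_trans h2.2.1 (card_le_card hsub2)
    rw [card_sdiff_of_subset hBC, hB] at h3
    omega
  -- lower bound for the weight sum
  have hW : ∀ m : ℕ, ∀ S : Finset V, S.card = m + 2 →
      (m + 1) * (2*k - 2) ≤ ∑ v : V, ((S.filter fun u => G.Adj v u).card - 1) := by
    intro m
    induction m with
    | zero =>
      intro S hS
      obtain ⟨x, y, hxy, rfl⟩ := Finset.card_eq_two.mp hS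
      have h1 := hcommon x y hxy
      calc 1 * (2*k-2) = 2*k-2 := one_mul _
        _ ≤ (univ.filter fun v => G.Adj v x ∧ G.Adj v y).card := h1
        _ = ∑ _v ∈ univ.filter fun v => G.Adj v x ∧ G.Adj v y, 1 := by
            rw [card_eq_sum_ones]
        _ ≤ ∑ v ∈ univ.filter fun v => G.Adj v x ∧ G.Adj v y,
              ((({x,y} : Finset V).filter fun u => G.Adj v u).card - 1) := by
            apply sum_le_sum
            intro v hv
            simp only [mem_filter, mem_univ, true_and] at hv
            have hsub : ({x,y} : Finset V) ⊆
                ({x,y} : Finset V).filter fun u => G.Adj v u := by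
              intro u hu
              rw [mem_filter]
              refine ⟨hu, ?_⟩
              rcases mem_insert.mp hu with rfl | hu
              · exact hv.1
              · rw [mem_singleton] at hu; subst hu; exact hv.2
            have h2 : 2 ≤ (({x,y}:Finset V).filter fun u => G.Adj v u).card := by
              calc 2 = ({x,y}:Finset V).card := (card_pair hxy).symm
                _ ≤ _ := card_le_card hsub
            omega
        _ ≤ ∑ v : V, ((({x,y} : Finset V).filter fun u => G.Adj v u).card - 1) :=
            sum_le_sum_of_subset (subset_univ _)
    | succ m ih =>
      intro S hS
      have hx : S.Nonempty := by rw [← card_pos]; omega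
      obtain ⟨x, hxS⟩ := hx
      set S' := S.erase x with hS'
      have hS'c : S'.card = m + 2 := by rw [hS', card_erase_of_mem hxS]; omega
      have hy : S'.Nonempty := by rw [← card_pos]; omega
      obtain ⟨y, hyS'⟩ := hy
      have hxy : x ≠ y := fun h => (ne_of_mem_erase hyS') h.symm
      have hxS' : x ∉ S' := notMem_erase x S
      have hins : insert x S' = S := insert_erase hxS
      have hpoint : ∀ v : V,
          ((S'.filter fun u => G.Adj v u).card - 1) +
            (if G.Adj v x ∧ G.Adj v y then 1 else 0)
            ≤ (S.filter fun u => G.Adj v u).card - 1 := by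
        intro v
        by_cases hc : G.Adj v x ∧ G.Adj v y
        · rw [if_pos hc]
          have h1 : S.filter (fun u => G.Adj v u)
              = insert x (S'.filter fun u => G.Adj v u) := by
            rw [← hins, filter_insert, if_pos hc.1]
          have h2 : x ∉ S'.filter fun u => G.Adj v u :=
            fun h => hxS' (mem_of_mem_filter x h)
          have h3 : (S.filter fun u => G.Adj v u).card
              = (S'.filter fun u => G.Adj v u).card + 1 := by
            rw [h1, card_insert_of_notMem h2]
          have h4 : 1 ≤ (S'.filter fun u => G.Adj v u).card :=
            card_pos.mpr ⟨y, mem_filter.mpr ⟨hyS', hc.2⟩⟩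
          omega
        · rw [if_neg hc]
          have h5 : (S'.filter fun u => G.Adj v u).card
              ≤ (S.filter fun u => G.Adj v u).card :=
            card_le_card (filter_subset_filter _ (erase_subset x S))
          omega
      have hsum := Finset.sum_le_sum (fun v (_ : v ∈ (univ : Finset V)) => hpoint v)
      rw [Finset.sum_add_distrib] at hsum
      have hcardsum : (∑ v : V, if G.Adj v x ∧ G.Adj v y then 1 else 0)
          = (univ.filter fun v => G.Adj v x ∧ G.Adj v y).card :=
        (Finset.card_filter _ _).symm
      rw [hcardsum] at hsum
      have hih := ih S' hS'c
      have h6 := hcommon x y hxy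
      calc (m + 1 + 1) * (2*k-2) = (m+1)*(2*k-2) + (2*k-2) := by ring
        _ ≤ (∑ v : V, ((S'.filter fun u => G.Adj v u).card - 1)) +
              (univ.filter fun v => G.Adj v x ∧ G.Adj v y).card :=
            Nat.add_le_add hih h6
        _ ≤ _ := hsum
  -- splitting G-edges into F-edges and H-edges
  have hsplitG : ∀ (v : V) (S : Finset V),
      (S.filter fun u => G.Adj v u).card ≤
        (S.filter fun u => F.Adj v u).card + (S.filter fun u => H.Adj v u).card := by
    intro v S
    calc (S.filter fun u => G.Adj v u).card
        ≤ ((S.filter fun u => F.Adj v u) ∪ (S.filter fun u => H.Adj v u)).card := by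
          apply card_le_card
          intro u hu
          have hu' := mem_filter.mp hu
          rw [mem_union, mem_filter, mem_filter]
          by_cases hF : F.Adj v u
          · exact Or.inl ⟨hu'.1, hF⟩
          · refine Or.inr ⟨hu'.1, ?_⟩
            rw [hH, SimpleGraph.sdiff_adj]
            exact ⟨hu'.2, hF⟩
      _ ≤ _ := card_union_le _ _
  -- the small case : 2 ≤ |S| ≤ k-1
  have hsmall : ∀ S : Finset V, 2 ≤ S.card → S.card + 1 ≤ k →
      S.card ≤ (kNbhd H 2 S).card := by
    intro S h2 hsk
    by_contra hlt
    push_neg at hlt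
    set D := kNbhd H 2 S with hD
    have hDcard : D.card ≤ S.card - 1 := by omega
    have hpoint : ∀ v : V, v ∉ D →
        (S.filter fun u => G.Adj v u).card - 1 ≤ (S.filter fun u => F.Adj v u).card := by
      intro v hv
      have hH1 : (S.filter fun u => H.Adj v u).card ≤ 1 := by
        by_contra hcon
        exact hv (by
          simp only [hD, kNbhd, mem_filter, mem_univ, true_and]
          omega)
      have hs := hsplitG v S
      omega
    have hstep1 : ∑ v ∈ univ \ D, ((S.filter fun u => G.Adj v u).card - 1)
        ≤ ∑ v ∈ univ \ D, (S.filter fun u => F.Adj v u).card :=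
      sum_le_sum fun v hv => hpoint v (mem_sdiff.mp hv).2
    have hstep2 : ∑ v ∈ univ \ D, (S.filter fun u => F.Adj v u).card
        ≤ ∑ v : V, (S.filter fun u => F.Adj v u).card :=
      sum_le_sum_of_subset (sdiff_subset)
    have hdouble : ∑ v : V, (S.filter fun u => F.Adj v u).card
        = ∑ u ∈ S, (univ.filter fun w => F.Adj u w).card := by
      have e1 : ∀ v : V, (S.filter fun u => F.Adj v u).card
          = ∑ u ∈ S, if F.Adj v u then 1 else 0 := fun v => Finset.card_filter _ _
      have e2 : ∀ u : V, (univ.filter fun w => F.Adj u w).card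
          = ∑ v : V, if F.Adj v u then 1 else 0 := by
        intro u
        rw [Finset.card_filter]
        exact Finset.sum_congr rfl fun v _ => by rw [F.adj_comm]
      simp only [e1, e2]
      exact Finset.sum_comm
    have hbudget : ∑ u ∈ S, (univ.filter fun w => F.Adj u w).card ≤ S.card * (k - 2) := by
      calc ∑ u ∈ S, (univ.filter fun w => F.Adj u w).card
          ≤ ∑ _u ∈ S, (k-2) := sum_le_sum fun u _ => hdegF u
        _ = S.card * (k-2) := by rw [sum_const, smul_eq_mul]
    have hDsum : ∑ v ∈ D, ((S.filter fun u => G.Adj v u).card - 1)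
        ≤ D.card * (S.card - 1) := by
      have := Finset.sum_le_card_nsmul D
        (fun v => (S.filter fun u => G.Adj v u).card - 1) (S.card - 1)
        (fun v _ => by
          show (S.filter fun u => G.Adj v u).card - 1 ≤ S.card - 1
          have := card_le_card (filter_subset (fun u => G.Adj v u) S)
          omega)
      simpa [smul_eq_mul] using this
    have hWlow := hW (S.card - 2) S (by omega)
    have htot : (S.card - 2 + 1) * (2*k-2) ≤ S.card * (k-2) + D.card * (S.card - 1) := by
      calc (S.card - 2 + 1) * (2*k-2)
          ≤ ∑ v : V, ((S.filter fun u => G.Adj v u).card - 1) := hWlow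
        _ = (∑ v ∈ univ \ D, ((S.filter fun u => G.Adj v u).card - 1))
            + ∑ v ∈ D, ((S.filter fun u => G.Adj v u).card - 1) :=
            (Finset.sum_sdiff (subset_univ D)).symm
        _ ≤ (S.card * (k-2)) + D.card * (S.card - 1) := by
            apply Nat.add_le_add _ hDsum
            calc ∑ v ∈ univ \ D, ((S.filter fun u => G.Adj v u).card - 1)
                ≤ ∑ v ∈ univ \ D, (S.filter fun u => F.Adj v u).card := hstep1
              _ ≤ ∑ v : V, (S.filter fun u => F.Adj v u).card := hstep2
              _ = ∑ u ∈ S, (univ.filter fun w => F.Adj u w).card := hdouble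
              _ ≤ S.card * (k-2) := hbudget
    obtain ⟨c, hc⟩ : ∃ c, S.card = c + 2 := ⟨S.card - 2, by omega⟩
    obtain ⟨b, hb⟩ : ∃ b, k = c + 3 + b := ⟨k - c - 3, by omega⟩
    have hD2 : D.card ≤ c + 1 := by omega
    rw [hc, hb] at htot
    have e3 : 2*(c+3+b) - 2 = 2*c + 2*b + 4 := by omega
    have e4 : (c+3+b) - 2 = c + b + 1 := by omega
    have e5 : c + 2 - 2 + 1 = c + 1 := by omega
    have e6 : c + 2 - 1 = c + 1 := by omega
    rw [e3, e4, e5, e6] at htot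
    have h7 : D.card * (c+1) ≤ (c+1) * (c+1) :=
      Nat.mul_le_mul hD2 (le_refl (c+1))
    nlinarith [htot, h7]
  -- the big case : |S| ≥ k
  have hbig : ∀ S : Finset V, k ≤ S.card → kNbhd H 2 S ≠ univ →
      S.card ≤ (kNbhd H 2 S).card := by
    intro S hSk hSne
    have hsub : kNbhd G k S ⊆ kNbhd H 2 S := by
      intro v hv
      simp only [kNbhd, mem_filter, mem_univ, true_and] at hv ⊢
      have hF : (S.filter fun u => F.Adj v u).card ≤ k - 2 :=
        le_trans (card_le_card (filter_subset_filter _ (subset_univ S))) (hdegF v)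
      have hs := hsplitG v S
      omega
    have hne : kNbhd G k S ≠ univ := by
      intro h
      exact hSne (Finset.univ_subset_iff.mp (h ▸ hsub))
    exact le_trans (hP S hSk hne) (card_le_card hsub)
  -- assemble
  unfold bindingNum
  split_ifs with hQ
  · apply Finset.le_inf'
    intro S hS
    simp only [mem_filter, mem_univ, true_and] at hS
    obtain ⟨hS2, hSne⟩ := hS
    have hcard : S.card ≤ (kNbhd H 2 S).card := by
      by_cases hsk : S.card + 1 ≤ k
      · exact hsmall S hS2 hsk
      · exact hbig S (by omega) hSne
    have hpos : (0:ℝ) < (S.card:ℝ) := by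
      have : 0 < S.card := by omega
      exact_mod_cast this
    rw [one_le_div hpos]
    exact_mod_cast hcard
  · exfalso
    apply hQ
    have h1 : 1 < Fintype.card V := by omega
    obtain ⟨a, b, hab⟩ := Fintype.exists_pair_of_one_lt_card h1
    refine ⟨{a, b}, ?_⟩
    simp only [mem_filter, mem_univ, true_and]
    refine ⟨le_of_eq (card_pair hab).symm, ?_⟩
    intro h
    have ha : a ∈ kNbhd H 2 ({a, b} : Finset V) := h ▸ mem_univ a
    simp only [kNbhd, mem_filter, mem_univ, true_and] at ha
    have hsub : ({a,b} : Finset V).filter (fun u => H.Adj a u) ⊆ {b} := by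
      intro u hu
      have hu' := mem_filter.mp hu
      rcases mem_insert.mp hu'.1 with rfl | hub
      · exact absurd hu'.2 (H.irrefl)
      · exact hub
    have hcb := card_le_card hsub
    rw [card_singleton] at hcb
    omega
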